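/- Let K be an abelian group equipped with l commuting automorphisms t_1,...,t_l and let (I_1,I_2) be a pair of valuations for K with constants C, b_1,...,b_l. Let G = K ⋊ ℤ^l and let S be a finite generating set for G. Let z = max{B(m) : (m,k) ∈ S ∪ S^{-1}} and assume z > 0. Then there exists F ∈ ℕ such that for every g = (a,k) ∈ G with |B(a)| ≤ z and k ≠ 0, either I_1(k) ≤ |g|_S · z/4 + F or I_2(k) ≤ |g|_S · z/4 + F. -/

import Mathlib

/-- A pair of valuations for an abelian group `K` equipped with `l` commuting
automorphisms (packaged as a homomorphism `t` from `ℤ^l` to `AddAut K`), with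
constants `C` and `b₁, …, b_l`.  The functions `I₁ I₂ : K → ℝ` are only
meaningful on nonzero elements. -/
def IsPairOfValuations {K : Type*} [AddCommGroup K] {l : ℕ}
    (t : Multiplicative (Fin l → ℤ) →* Multiplicative (AddAut K))
    (I₁ I₂ : K → ℝ) (C : ℝ) (b : Fin l → ℝ) : Prop :=
  (∀ k : K, k ≠ 0 → ∀ i : Fin l,
      I₁ (Multiplicative.toAdd (t (Multiplicative.ofAdd (Pi.single i 1))) k) = I₁ k + b i ∧
      I₂ (Multiplicative.toAdd (t (Multiplicative.ofAdd (Pi.single i 1))) k) = I₂ k - b i) ∧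
  (∀ k : K, k ≠ 0 → I₁ (-k) = I₁ k ∧ I₂ (-k) = I₂ k) ∧
  (∀ k₁ k₂ : K, k₁ ≠ 0 → k₂ ≠ 0 → k₁ + k₂ ≠ 0 →
      I₁ (k₁ + k₂) ≤ max (I₁ k₁) (I₁ k₂) + C ∧
      I₂ (k₁ + k₂) ≤ max (I₂ k₁) (I₂ k₂) + C)

/-- `B(m) = b₁ m₁ + ⋯ + b_l m_l`. -/
def Bform {l : ℕ} (b : Fin l → ℝ) (m : Fin l → ℤ) : ℝ := ∑ i, b i * (m i : ℝ)

/-- `AddAut K` as multiplicative automorphisms of `Multiplicative K`. -/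
def addAutToMulAut {K : Type*} [AddCommGroup K] :
    Multiplicative (AddAut K) →* MulAut (Multiplicative K) where
  toFun e := AddEquiv.toMultiplicative (Multiplicative.toAdd e)
  map_one' := rfl
  map_mul' _ _ := rfl

/-- The semidirect product `K ⋊ ℤ^l`, where `ℤ^l` acts on `K` through `t`. -/
abbrev Gsd {K : Type*} [AddCommGroup K] {l : ℕ}
    (t : Multiplicative (Fin l → ℤ) →* Multiplicative (AddAut K)) : Type _ :=
  Multiplicative K ⋊[addAutToMulAut.comp t] Multiplicative (Fin l → ℤ)

/-- Word length with respect to a generating set `S` (inverses allowed). -/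
noncomputable def wordLength {G : Type*} [Group G] (S : Set G) (g : G) : ℕ :=
  sInf {n | ∃ f : Fin n → G, (∀ i, f i ∈ S ∪ S⁻¹) ∧ (List.ofFn f).prod = g}

open Finset

section Merge
variable {K : Type*} [AddCommGroup K] (I : K → ℝ) (C : ℝ)

/-- balanced binary merge -/
lemma merge_balanced (hsub : ∀ k₁ k₂ : K, k₁ ≠ 0 → k₂ ≠ 0 → k₁ + k₂ ≠ 0 →
      I (k₁ + k₂) ≤ max (I k₁) (I k₂) + C) : ∀ (d : ℕ) (s : Finset ℕ) (x : ℕ → K), s.card ≤ 2 ^ d →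
    (∀ j ∈ s, x j ≠ 0) → (∑ j ∈ s, x j) ≠ 0 →
    ∃ j ∈ s, I (∑ j ∈ s, x j) ≤ I (x j) + (max C 0) * d := by
  intro d
  induction d with
  | zero =>
    intro s x hcard hx hsum
    have h1 : s.card = 1 := by
      rcases Nat.eq_or_lt_of_le hcard with h | h
      · simpa using h
      · interval_cases h' : s.card
        · exfalso; rw [Finset.card_eq_zero] at h'; simp [h'] at hsum
    obtain ⟨j, hj⟩ := Finset.card_eq_one.mp h1
    refine ⟨j, by simp [hj], ?_⟩
    simp [hj]
  | succ d ih =>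
    intro s x hcard hx hsum
    have hC0 : (0:ℝ) ≤ max C 0 := le_max_right _ _
    have hstep : (max C 0) * d ≤ (max C 0) * (d+1) := by
      apply mul_le_mul_of_nonneg_left _ hC0
      push_cast; linarith
    by_cases hsmall : s.card ≤ 2 ^ d
    · obtain ⟨j, hj, hle⟩ := ih s x hsmall hx hsum
      exact ⟨j, hj, hle.trans (by push_cast at hstep ⊢; linarith)⟩
    · push_neg at hsmall
      obtain ⟨s₁, hs₁, hcard₁⟩ := Finset.exists_subset_card_eq hsmall.le
      set s₂ := s \ s₁ with hs₂def
      have hs₂ : s₂ ⊆ s := Finset.sdiff_subset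
      have hsplit : (∑ j ∈ s₂, x j) + (∑ j ∈ s₁, x j) = ∑ j ∈ s, x j :=
        Finset.sum_sdiff hs₁
      have hcard₂ : s₂.card ≤ 2 ^ d := by
        have hd : s₂.card = s.card - s₁.card := Finset.card_sdiff_of_subset hs₁
        have h2 : s.card ≤ 2 ^ (d+1) := hcard
        have hp : (2:ℕ) ^ (d+1) = 2^d + 2^d := by ring
        rw [hcard₁] at hd
        omega
      by_cases h1 : (∑ j ∈ s₁, x j) = 0
      · rw [h1, add_zero] at hsplit
        rw [← hsplit] at hsum ⊢
        obtain ⟨j, hj, hle⟩ := ih s₂ x hcard₂ (fun j hj => hx j (hs₂ hj)) hsum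
        exact ⟨j, hs₂ hj, hle.trans (by push_cast at hstep ⊢; linarith)⟩
      by_cases h2 : (∑ j ∈ s₂, x j) = 0
      · rw [h2, zero_add] at hsplit
        rw [← hsplit] at hsum ⊢
        obtain ⟨j, hj, hle⟩ := ih s₁ x (hcard₁.le.trans le_rfl) (fun j hj => hx j (hs₁ hj)) hsum
        exact ⟨j, hs₁ hj, hle.trans (by push_cast at hstep ⊢; linarith)⟩
      · have hns : (∑ j ∈ s₂, x j) + (∑ j ∈ s₁, x j) ≠ 0 := by rw [hsplit]; exact hsum
        have hmax := hsub _ _ h2 h1 hns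
        rw [hsplit] at hmax
        have hCle : C ≤ max C 0 := le_max_left _ _
        rcases max_cases (I (∑ j ∈ s₂, x j)) (I (∑ j ∈ s₁, x j)) with ⟨heq, _⟩ | ⟨heq, _⟩
        · obtain ⟨j, hj, hle⟩ := ih s₂ x hcard₂ (fun j hj => hx j (hs₂ hj)) h2
          refine ⟨j, hs₂ hj, ?_⟩
          rw [heq] at hmax
          push_cast
          push_cast at hle
          nlinarith [hC0]
        · obtain ⟨j, hj, hle⟩ := ih s₁ x hcard₁.le (fun j hj => hx j (hs₁ hj)) h1
          refine ⟨j, hs₁ hj, ?_⟩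
          rw [heq] at hmax
          push_cast
          push_cast at hle
          nlinarith [hC0]

/-- sequential merge with linearly decaying bounds -/
lemma merge_seq (hsub : ∀ k₁ k₂ : K, k₁ ≠ 0 → k₂ ≠ 0 → k₁ + k₂ ≠ 0 →
      I (k₁ + k₂) ≤ max (I k₁) (I k₂) + C) (C' : ℝ) (hC : C ≤ 2 * C') (hC0 : 0 ≤ C') :
    ∀ (L : List K) (A : ℝ),
    (∀ (r : ℕ) (h : r < L.length), L[r] ≠ 0 → I L[r] ≤ A - 2 * C' * r) →
    L.sum ≠ 0 → I L.sum ≤ A + 2 * C' := by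
  intro L
  induction L with
  | nil => intro A _ hsum; simp at hsum
  | cons a L ih =>
    intro A hbd hsum
    have ha : a ≠ 0 → I a ≤ A := by
      intro h; have := hbd 0 (by simp) h; simp only [Nat.cast_zero, mul_zero, sub_zero] at this; exact this
    have hL : ∀ (r : ℕ) (h : r < L.length), L[r] ≠ 0 → I L[r] ≤ (A - 2*C') - 2 * C' * r := by
      intro r hr hne
      have := hbd (r+1) (by simpa using Nat.succ_lt_succ hr) (by simpa using hne)
      simp only [List.getElem_cons_succ] at this
      push_cast at this ⊢
      linarith
    rw [List.sum_cons] at hsum ⊢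
    by_cases h1 : a = 0
    · rw [h1, zero_add] at hsum ⊢
      have := ih (A - 2*C') hL hsum
      linarith
    by_cases h2 : L.sum = 0
    · rw [h2, add_zero] at hsum ⊢
      have := ha h1
      linarith
    · have := hsub a L.sum h1 h2 hsum
      have hia := ha h1
      have hiL := ih (A - 2*C') hL h2
      rcases max_cases (I a) (I L.sum) with ⟨heq, _⟩ | ⟨heq, _⟩ <;> rw [heq] at this <;> linarith

end Merge

section Path
variable (n : ℕ) (z : ℝ) (ω : ℕ → ℝ)

/-- rise above a level along a sub-path -/
lemma base_rise (hstep : ∀ j < n, |ω (j+1) - ω j| ≤ z) (v : ℝ) (p : ℕ) :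
    ∀ q, p ≤ q → q ≤ n →
      ω q - max (v + z) (ω p) ≤
        ∑ j ∈ Ico p q, (if v < ω j then max (ω (j+1) - ω j) 0 else 0) := by
  intro q hq
  induction q, hq using Nat.le_induction with
  | base =>
    intro _
    simp only [Ico_self, sum_empty]
    have := le_max_right (v + z) (ω p); linarith
  | succ q hpq ih =>
    intro hqn
    have hqn' : q ≤ n := by omega
    have ihq := ih hqn'
    rw [Finset.sum_Ico_succ_top hpq]
    have hnn : (0:ℝ) ≤ ∑ j ∈ Ico p q, (if v < ω j then max (ω (j+1) - ω j) 0 else 0) := by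
      apply Finset.sum_nonneg; intro j _; positivity
    by_cases hv : v < ω q
    · rw [if_pos hv]
      have : ω (q+1) - ω q ≤ max (ω (q+1) - ω q) 0 := le_max_left _ _
      linarith
    · rw [if_neg hv]
      push_neg at hv
      have hs := hstep q (by omega)
      have h1 : ω (q+1) ≤ ω q + z := by
        have := abs_le.mp hs; linarith [this.2]
      have h2 : ω (q+1) ≤ max (v + z) (ω p) := le_trans (by linarith [le_max_left (v+z) (ω p)]) (le_refl _)
      linarith [le_max_left (v + z) (ω p)]

/-- fall above a level along a sub-path -/
lemma base_fall (hstep : ∀ j < n, |ω (j+1) - ω j| ≤ z) (v : ℝ) (p : ℕ) :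
    ∀ q, p ≤ q → q ≤ n →
      ω p - max (v + z) (ω q) ≤
        ∑ j ∈ Ico p q, (if v < ω j then max (ω j - ω (j+1)) 0 else 0) := by
  intro q hq
  induction q, hq using Nat.le_induction with
  | base =>
    intro _
    simp only [Ico_self, sum_empty]
    have := le_max_right (v + z) (ω p); linarith
  | succ q hpq ih =>
    intro hqn
    have hqn' : q ≤ n := by omega
    have ihq := ih hqn'
    rw [Finset.sum_Ico_succ_top hpq]
    have hnn : (0:ℝ) ≤ ∑ j ∈ Ico p q, (if v < ω j then max (ω j - ω (j+1)) 0 else 0) := by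
      apply Finset.sum_nonneg; intro j _; positivity
    by_cases hv : v < ω q
    · rw [if_pos hv]
      have hterm : ω q - ω (q+1) ≤ max (ω q - ω (q+1)) 0 := le_max_left _ _
      have hkey : max (v + z) (ω q) ≤ max (v + z) (ω (q+1)) + max (ω q - ω (q+1)) 0 := by
        rcases le_total (ω q) (ω (q+1)) with h | h
        · have : max (v+z) (ω q) ≤ max (v+z) (ω (q+1)) := max_le_max le_rfl h
          have : (0:ℝ) ≤ max (ω q - ω (q+1)) 0 := le_max_right _ _
          rcases le_total (v+z) (ω q) with h' | h' <;>
            simp [max_le_iff] <;>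
            constructor <;> try linarith [le_max_left (v+z) (ω (q+1)), le_max_right (v+z) (ω (q+1)), le_max_right (ω q - ω (q+1)) (0:ℝ)]
        · have h0 : ω q - ω (q+1) ≤ max (ω q - ω (q+1)) 0 := le_max_left _ _
          apply max_le
          · linarith [le_max_left (v+z) (ω (q+1)), le_max_right (ω q - ω (q+1)) (0:ℝ)]
          · linarith [le_max_right (v+z) (ω (q+1))]
      linarith
    · rw [if_neg hv]
      push_neg at hv
      have hs := hstep q (by omega)
      have h1 : ω (q+1) ≥ ω q - z := by
        have := abs_le.mp hs; linarith [this.1]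
      have hz0 : 0 ≤ z := le_trans (abs_nonneg _) hs
      have hkey : max (v + z) (ω q) ≤ max (v + z) (ω (q+1)) := by
        apply max_le (le_max_left _ _)
        linarith [le_max_left (v + z) (ω (q+1))]
      linarith

end Path

section Composite
variable (n : ℕ) (z : ℝ) (w : ℕ → ℝ)

/-- total descent-travel strictly below a level `u` is at least `2(m+u) - 3z`. -/
lemma composite_below (hz0 : 0 ≤ z) (hw0 : w 0 = 0) (hwn : -(w n) ≤ z) (hwn2 : w n ≤ z)
    (hstep : ∀ j < n, |w (j+1) - w j| ≤ z) (u : ℝ) (τ js : ℕ)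
    (hτ : τ ≤ n) (hjs : js ≤ n) (hwjs : u ≤ w js) :
    2 * (-(w τ) + u) - 3 * z ≤
      ∑ j ∈ range n, (if w j < u then |w (j+1) - w j| else 0) := by
  set ω : ℕ → ℝ := fun j => -(w j) with hω
  have hstepω : ∀ j < n, |ω (j+1) - ω j| ≤ z := by
    intro j hj
    have := hstep j hj
    simp only [hω]
    rwa [show -w (j+1) - -w j = -(w (j+1) - w j) by ring, abs_neg]
  set G : ℕ → ℝ := fun j => if w j < u then |w (j+1) - w j| else 0 with hG
  have hGnn : ∀ j, 0 ≤ G j := by intro j; simp only [hG]; positivity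
  have hriseG : ∀ j, (if -u < ω j then max (ω (j+1) - ω j) 0 else 0) ≤ G j := by
    intro j
    simp only [hω, hG]
    by_cases h : w j < u
    · rw [if_pos (by linarith), if_pos h]
      apply max_le _ (abs_nonneg _)
      rw [show -w (j+1) - -w j = -(w (j+1) - w j) by ring]
      exact neg_le_abs _
    · rw [if_neg (by intro hc; apply h; linarith), if_neg h]
  have hfallG : ∀ j, (if -u < ω j then max (ω j - ω (j+1)) 0 else 0) ≤ G j := by
    intro j
    simp only [hω, hG]
    by_cases h : w j < u
    · rw [if_pos (by linarith), if_pos h]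
      apply max_le _ (abs_nonneg _)
      rw [show -w j - -w (j+1) = (w (j+1) - w j) by ring]
      exact le_abs_self _
    · rw [if_neg (by intro hc; apply h; linarith), if_neg h]
  have RiseP : ∀ p q, p ≤ q → q ≤ n →
      ω q - max (-u + z) (ω p) ≤ ∑ j ∈ Ico p q, G j := by
    intro p q hpq hqn
    refine le_trans (base_rise n z ω hstepω (-u) p q hpq hqn) ?_
    exact Finset.sum_le_sum fun j _ => hriseG j
  have FallP : ∀ p q, p ≤ q → q ≤ n →
      ω p - max (-u + z) (ω q) ≤ ∑ j ∈ Ico p q, G j := by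
    intro p q hpq hqn
    refine le_trans (base_fall n z ω hstepω (-u) p q hpq hqn) ?_
    exact Finset.sum_le_sum fun j _ => hfallG j
  have hpos : ∀ p q, (0:ℝ) ≤ ∑ j ∈ Ico p q, G j := by
    intro p q; exact Finset.sum_nonneg fun j _ => hGnn j
  have hω0 : ω 0 = 0 := by simp [hω, hw0]
  have hωn : ω n ≤ z := by simpa [hω] using hwn
  have hωn2 : -z ≤ ω n := by simp only [hω]; linarith
  have hωjs : ω js ≤ -u := by simp only [hω]; linarith
  have hmaxjs : max (-u + z) (ω js) ≤ -u + z := max_le le_rfl (by linarith)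
  rcases le_total τ js with hAB | hAB
  · -- τ ≤ js
    have hsum1 : ∑ j ∈ Ico 0 τ, G j + ∑ j ∈ Ico τ js, G j + ∑ j ∈ Ico js n, G j
        = ∑ j ∈ range n, G j := by
      rw [Finset.sum_Ico_consecutive _ (Nat.zero_le _) hAB,
        Finset.sum_Ico_consecutive _ (Nat.zero_le _) hjs, Finset.range_eq_Ico]
    have p1 := RiseP 0 τ (Nat.zero_le _) hτ
    have p2 := FallP τ js hAB hjs
    have p3 := RiseP js n hjs le_rfl
    rw [hω0] at p1
    have p2' : ω τ - (-u + z) ≤ ∑ j ∈ Ico τ js, G j := by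
      refine le_trans ?_ p2; linarith [hmaxjs]
    have p3' : -z - (-u + z) ≤ ∑ j ∈ Ico js n, G j := by
      refine le_trans ?_ p3; linarith [hmaxjs, hωn2]
    rcases le_total u z with hu | hu
    · have p1' : ω τ - (z - u) ≤ ∑ j ∈ Ico 0 τ, G j := by
        refine le_trans ?_ p1
        have : max (-u + z) 0 = -u + z := max_eq_left (by linarith)
        rw [this]; linarith
      have := hpos js n
      simp only [hω] at p1' p2' ⊢
      linarith [hsum1]
    · have p1' : ω τ ≤ ∑ j ∈ Ico 0 τ, G j := by
        refine le_trans ?_ p1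
        have : max (-u + z) 0 = 0 := max_eq_right (by linarith)
        rw [this]; linarith
      simp only [hω] at p1' p2' p3' ⊢
      linarith [hsum1]
  · -- js ≤ τ
    have hsum1 : ∑ j ∈ Ico 0 js, G j + ∑ j ∈ Ico js τ, G j + ∑ j ∈ Ico τ n, G j
        = ∑ j ∈ range n, G j := by
      rw [Finset.sum_Ico_consecutive _ (Nat.zero_le _) hAB,
        Finset.sum_Ico_consecutive _ (Nat.zero_le _) hτ, Finset.range_eq_Ico]
    have p1 := FallP 0 js (Nat.zero_le _) hjs
    have p2 := RiseP js τ hAB hτ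
    have p3 := FallP τ n hτ le_rfl
    rw [hω0] at p1
    have p1' : u - z ≤ ∑ j ∈ Ico 0 js, G j := by
      refine le_trans ?_ p1; linarith [hmaxjs]
    have p2' : ω τ - (-u + z) ≤ ∑ j ∈ Ico js τ, G j := by
      refine le_trans ?_ p2; linarith [hmaxjs]
    rcases le_total u 0 with hu | hu
    · have p3' : ω τ - (-u + z) ≤ ∑ j ∈ Ico τ n, G j := by
        refine le_trans ?_ p3
        have : max (-u + z) (ω n) = -u + z := max_eq_left (by linarith)
        rw [this]
      have := hpos 0 js
      simp only [hω] at p2' p3' ⊢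
      linarith [hsum1]
    · have p3' : ω τ - z ≤ ∑ j ∈ Ico τ n, G j := by
        refine le_trans ?_ p3
        have hmn : max (-u + z) (ω n) ≤ z := max_le (by linarith) hωn
        linarith
      simp only [hω] at p1' p2' p3' ⊢
      linarith [hsum1]

end Composite

section Geom
variable (n : ℕ) (z W u : ℝ) (w : ℕ → ℝ)

lemma travel_bound (hstep : ∀ j < n, |w (j+1) - w j| ≤ z) :
    ∀ a b, a ≤ b → b ≤ n → |w b - w a| ≤ ((b:ℝ) - a) * z := by
  intro a b hab hbn
  have htel : w b - w a = ∑ j ∈ Ico a b, (w (j+1) - w j) := by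
    rw [Finset.sum_Ico_eq_sub _ hab]
    rw [Finset.sum_range_sub (fun i => w i), Finset.sum_range_sub (fun i => w i)]
    ring
  rw [htel]
  refine le_trans (Finset.abs_sum_le_sum_abs _ _) ?_
  have : ∀ j ∈ Ico a b, |w (j+1) - w j| ≤ z := by
    intro j hj
    rw [Finset.mem_Ico] at hj
    exact hstep j (by omega)
  refine le_trans (Finset.sum_le_sum this) ?_
  rw [Finset.sum_const, Nat.card_Ico, nsmul_eq_mul]
  rw [Nat.cast_sub hab]

lemma geom_band (hz0 : 0 ≤ z) (hW : 0 ≤ W) (hw0 : w 0 = 0) (hwn : |w n| ≤ z)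
    (hstep : ∀ j < n, |w (j+1) - w j| ≤ z) :
    (((range n).filter (fun j => u < w j ∧ w j ≤ u + W)).card : ℝ) * z ≤
      (n:ℝ) * z
      - 2 * ((range (n+1)).sup' nonempty_range_succ w
             + (range (n+1)).sup' nonempty_range_succ (fun j => -(w j)))
      + 2 * W + 6 * z := by
  set M := (range (n+1)).sup' nonempty_range_succ w with hMdef
  set m := (range (n+1)).sup' nonempty_range_succ (fun j => -(w j)) with hmdef
  obtain ⟨τM, hτMmem, hMeq⟩ :=
    Finset.exists_mem_eq_sup' (nonempty_range_succ : (range (n+1)).Nonempty) w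
  obtain ⟨τm, hτmmem, hmeq⟩ :=
    Finset.exists_mem_eq_sup' (nonempty_range_succ : (range (n+1)).Nonempty) (fun j => -(w j))
  have hM' : M = w τM := hMeq
  have hm' : m = -(w τm) := hmeq
  have hτM : τM ≤ n := by have := Finset.mem_range.mp hτMmem; omega
  have hτm : τm ≤ n := by have := Finset.mem_range.mp hτmmem; omega
  have hwn1 : w n ≤ z := (abs_le.mp hwn).2
  have hwn2 : -z ≤ w n := (abs_le.mp hwn).1
  -- VLOW : 2 (M+m) ≤ n z + 2 z
  have hvlow : 2 * (M + m) ≤ (n:ℝ) * z + 2 * z := by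
    rcases le_total τm τM with ho | ho
    · have h1 : m ≤ (τm:ℝ) * z := by
        have := travel_bound n z w hstep 0 τm (Nat.zero_le _) hτm
        rw [hw0] at this
        have h := (abs_le.mp this).1
        rw [hm']; push_cast at h ⊢; linarith
      have h2 : M + m ≤ ((τM:ℝ) - τm) * z := by
        have := travel_bound n z w hstep τm τM ho hτM
        have h := (abs_le.mp this).2
        rw [hM', hm']; linarith
      have h3 : M ≤ ((n:ℝ) - τM) * z + z := by
        have := travel_bound n z w hstep τM n hτM le_rfl
        have h := (abs_le.mp this).1
        rw [hM']; linarith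
      nlinarith
    · have h1 : M ≤ (τM:ℝ) * z := by
        have := travel_bound n z w hstep 0 τM (Nat.zero_le _) hτM
        rw [hw0] at this
        have h := (abs_le.mp this).2
        rw [hM']; push_cast at h ⊢; linarith
      have h2 : M + m ≤ ((τm:ℝ) - τM) * z := by
        have := travel_bound n z w hstep τM τm ho hτm
        have h := (abs_le.mp this).1
        rw [hM', hm']; linarith
      have h3 : m ≤ ((n:ℝ) - τm) * z + z := by
        have := travel_bound n z w hstep τm n hτm le_rfl
        have h := (abs_le.mp this).2
        rw [hm']; linarith
      nlinarith
  set band := (range n).filter (fun j => u < w j ∧ w j ≤ u + W) with hband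
  rcases band.eq_empty_or_nonempty with hbe | hbne
  · rw [hbe]
    simp only [Finset.card_empty, Nat.cast_zero, zero_mul]
    linarith
  · obtain ⟨js, hjs⟩ := hbne
    rw [hband, Finset.mem_filter, Finset.mem_range] at hjs
    obtain ⟨hjsn, hjsu, hjsW⟩ := hjs
    -- lower bound on travel strictly below u
    have hbelow := composite_below n z w hz0 hw0 (by linarith) hwn1 hstep u τm js
      hτm (by omega) (le_of_lt hjsu)
    rw [← hm'] at hbelow
    -- lower bound on travel strictly above u + W, via the reflected path
    have habove' := composite_below n z (fun j => -(w j)) hz0 (by simp [hw0])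
      (by simp only [neg_neg]; exact hwn1) (by show -(w n) ≤ z; linarith)
      (by intro j hj; rw [show -w (j+1) - -w j = -(w (j+1) - w j) by ring, abs_neg];
          exact hstep j hj)
      (-(u+W)) τM js hτM (by omega) (by simpa using hjsW)
    have habove : 2 * (M - (u + W)) - 3 * z ≤
        ∑ j ∈ range n, (if u + W < w j then |w (j+1) - w j| else 0) := by
      have hrr : ∀ j : ℕ,
          (if (fun j => -(w j)) j < -(u+W) then |(fun j => -(w j)) (j+1) - (fun j => -(w j)) j| else 0)
          = (if u + W < w j then |w (j+1) - w j| else 0) := by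
        intro j
        by_cases h : u + W < w j
        · rw [if_pos (by simpa using h), if_pos h,
            show -w (j+1) - -w j = -(w (j+1) - w j) by ring, abs_neg]
        · rw [if_neg (by simpa using h), if_neg h]
      calc 2 * (M - (u + W)) - 3 * z
          = 2 * (-(-(w τM)) + (-(u+W))) - 3 * z := by rw [hM']; ring
        _ ≤ _ := by
            refine le_trans habove' ?_
            exact le_of_eq (Finset.sum_congr rfl fun j _ => hrr j)
    -- pointwise decomposition of |Δ|
    have hdecomp : ∀ j : ℕ, |w (j+1) - w j| =
        (if u + W < w j then |w (j+1) - w j| else 0)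
        + (if u < w j ∧ w j ≤ u + W then |w (j+1) - w j| else 0)
        + (if w j ≤ u then |w (j+1) - w j| else 0) := by
      intro j
      by_cases h1 : u + W < w j
      · rw [if_pos h1, if_neg (by intro hc; linarith [hc.2]), if_neg (by intro hc; linarith)]
        ring
      · push_neg at h1
        by_cases h2 : u < w j
        · rw [if_neg (by intro hc; linarith), if_pos ⟨h2, h1⟩, if_neg (by intro hc; linarith)]
          ring
        · push_neg at h2
          rw [if_neg (by intro hc; linarith), if_neg (by intro hc; linarith [hc.1]), if_pos h2]
          ring
    have hsplitV : ∑ j ∈ range n, |w (j+1) - w j|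
        = (∑ j ∈ range n, (if u + W < w j then |w (j+1) - w j| else 0))
        + (∑ j ∈ range n, (if u < w j ∧ w j ≤ u + W then |w (j+1) - w j| else 0))
        + (∑ j ∈ range n, (if w j ≤ u then |w (j+1) - w j| else 0)) := by
      rw [← Finset.sum_add_distrib, ← Finset.sum_add_distrib]
      exact Finset.sum_congr rfl fun j _ => hdecomp j
    have hCle : (∑ j ∈ range n, (if w j < u then |w (j+1) - w j| else 0))
        ≤ ∑ j ∈ range n, (if w j ≤ u then |w (j+1) - w j| else 0) := by
      refine Finset.sum_le_sum fun j _ => ?_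
      by_cases h : w j < u
      · rw [if_pos h, if_pos h.le]
      · rw [if_neg h]; positivity
    -- card * z = Σ_band (z - |Δ|) + Σ_band |Δ|
    have hcz : (band.card : ℝ) * z = ∑ j ∈ band, (z - |w (j+1) - w j|) + ∑ j ∈ band, |w (j+1) - w j| := by
      rw [← Finset.sum_add_distrib]
      simp only [sub_add_cancel]
      rw [Finset.sum_const, nsmul_eq_mul]
    have hslack : ∑ j ∈ band, (z - |w (j+1) - w j|) ≤ (n:ℝ)*z - ∑ j ∈ range n, |w (j+1) - w j| := by
      have hsub : band ⊆ range n := Finset.filter_subset _ _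
      have h1 : ∑ j ∈ band, (z - |w (j+1) - w j|) ≤ ∑ j ∈ range n, (z - |w (j+1) - w j|) := by
        refine Finset.sum_le_sum_of_subset_of_nonneg hsub ?_
        intro j hj _
        have := hstep j (Finset.mem_range.mp hj)
        linarith
      have h2 : ∑ j ∈ range n, (z - |w (j+1) - w j|) = (n:ℝ)*z - ∑ j ∈ range n, |w (j+1) - w j| := by
        rw [Finset.sum_sub_distrib, Finset.sum_const, nsmul_eq_mul, Finset.card_range]
      linarith
    have hbandsum : ∑ j ∈ band, |w (j+1) - w j|
        = ∑ j ∈ range n, (if u < w j ∧ w j ≤ u + W then |w (j+1) - w j| else 0) := by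
      rw [hband, Finset.sum_filter]
    linarith [hbelow, habove, hsplitV, hCle, hcz, hslack, hbandsum]

end Geom

section AuxMain
variable {K : Type*} [AddCommGroup K]

/-- Core bound: coarse valuation of a sum of "lamps" along a path. -/
lemma aux_main (I : K → ℝ) (C C' z D : ℝ) (hCC' : C ≤ C') (hC'pos : 0 < C')
    (n : ℕ) (w : ℕ → ℝ) (x : ℕ → K) (M mb : ℝ) (Tmax : ℕ)
    (hsub : ∀ k₁ k₂ : K, k₁ ≠ 0 → k₂ ≠ 0 → k₁ + k₂ ≠ 0 →
      I (k₁ + k₂) ≤ max (I k₁) (I k₂) + C)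
    (hMw : ∀ j < n, w j ≤ M)
    (hmw : ∀ j < n, -(w j) ≤ mb)
    (hxI : ∀ j < n, x j ≠ 0 → I (x j) ≤ w j + D)
    (hT : ∀ u : ℝ, (((range n).filter (fun j => u < w j ∧ w j ≤ u + 2*C')).card ≤ Tmax))
    (hsum : (∑ j ∈ range n, x j) ≠ 0) :
    I (∑ j ∈ range n, x j) ≤ M + D + (max C 0) * (Nat.clog 2 Tmax) + 2 * C' := by
  classical
  set d : ℕ := Nat.clog 2 Tmax with hd
  set A : ℝ := M + D + (max C 0) * d with hA
  set rfun : ℕ → ℕ := fun j => ⌊(M - w j) / (2*C')⌋₊ with hrfun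
  set R : ℕ := ⌊(M + mb) / (2*C')⌋₊ with hR
  have hfib : ∀ j ∈ range n, rfun j ∈ range (R+1) := by
    intro j hj
    rw [Finset.mem_range] at hj ⊢
    have h1 : (M - w j) / (2*C') ≤ (M + mb) / (2*C') :=
      div_le_div_of_nonneg_right (by linarith [hmw j hj]) (by linarith)
    have h2 : rfun j ≤ R := Nat.floor_mono h1
    omega
  have hregroup := Finset.sum_fiberwise_of_maps_to hfib x
  set Sr : ℕ → K := fun r => ∑ j ∈ (range n).filter (fun j => rfun j = r), x j with hSr
  set LL : List K := List.ofFn (fun r : Fin (R+1) => Sr r) with hLL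
  have hLLsum : LL.sum = ∑ j ∈ range n, x j := by
    rw [hLL, List.sum_ofFn]
    rw [Fin.sum_univ_eq_sum_range (fun r => Sr r) (R+1)]
    exact hregroup
  have hLLlen : LL.length = R + 1 := by rw [hLL, List.length_ofFn]
  -- per-band bound
  have hband : ∀ (r : ℕ) (h : r < LL.length), LL[r] ≠ 0 → I LL[r] ≤ A - 2*C'*r := by
    intro r hr hne
    have hget : LL[r] = Sr r := by
      simp only [hLL, List.getElem_ofFn]
    rw [hget] at hne ⊢
    -- reduce to nonzero terms
    set fib := (range n).filter (fun j => rfun j = r) with hfibdef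
    set fib' := fib.filter (fun j => x j ≠ 0) with hfib'
    have hsum' : ∑ j ∈ fib', x j = Sr r := by
      rw [hfib', hSr, hfibdef]
      exact Finset.sum_filter_ne_zero _
    -- card bound via hT
    have hsubT : fib' ⊆ (range n).filter
        (fun j => (M - 2*C'*(r+1)) < w j ∧ w j ≤ (M - 2*C'*(r+1)) + 2*C') := by
      intro j hj
      rw [hfib', Finset.mem_filter, hfibdef, Finset.mem_filter] at hj
      obtain ⟨⟨hjn, hjr⟩, -⟩ := hj
      rw [Finset.mem_filter]
      refine ⟨hjn, ?_, ?_⟩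
      · have hnn : 0 ≤ (M - w j) / (2*C') := by
          apply div_nonneg _ (by linarith)
          linarith [hMw j (Finset.mem_range.mp hjn)]
        have := (Nat.floor_eq_iff hnn).mp hjr
        have h2 := this.2
        rw [div_lt_iff₀ (by linarith)] at h2
        push_cast at h2
        nlinarith
      · have hnn : 0 ≤ (M - w j) / (2*C') := by
          apply div_nonneg _ (by linarith)
          linarith [hMw j (Finset.mem_range.mp hjn)]
        have := (Nat.floor_eq_iff hnn).mp hjr
        have h1 := this.1
        rw [le_div_iff₀ (by linarith)] at h1
        nlinarith
    have hcard : fib'.card ≤ 2 ^ d := by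
      refine le_trans (Finset.card_le_card hsubT) ?_
      refine le_trans (hT (M - 2*C'*(r+1))) ?_
      rw [hd]
      exact Nat.le_pow_clog (by norm_num) _
    have hne' : (∑ j ∈ fib', x j) ≠ 0 := by rw [hsum']; exact hne
    obtain ⟨j₀, hj₀, hle⟩ := merge_balanced I C hsub d fib' x hcard
      (fun j hj => (Finset.mem_filter.mp hj).2) hne'
    have hj₀fib : j₀ ∈ fib := (Finset.mem_filter.mp hj₀).1
    have hj₀n : j₀ < n := Finset.mem_range.mp (Finset.mem_filter.mp hj₀fib).1
    have hj₀r : rfun j₀ = r := (Finset.mem_filter.mp hj₀fib).2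
    have hwj₀ : w j₀ ≤ M - 2*C'*r := by
      have hnn : 0 ≤ (M - w j₀) / (2*C') := by
        apply div_nonneg _ (by linarith)
        linarith [hMw j₀ hj₀n]
      have h1 := ((Nat.floor_eq_iff hnn).mp hj₀r).1
      rw [le_div_iff₀ (by linarith)] at h1
      nlinarith
    have hIxj₀ : I (x j₀) ≤ w j₀ + D := hxI j₀ hj₀n ((Finset.mem_filter.mp hj₀).2)
    rw [← hsum']
    calc I (∑ j ∈ fib', x j) ≤ I (x j₀) + (max C 0) * d := hle
      _ ≤ (M - 2*C'*r) + D + (max C 0) * d := by linarith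
      _ = A - 2*C'*r := by rw [hA]; ring
  have hLLne : LL.sum ≠ 0 := by rw [hLLsum]; exact hsum
  have := merge_seq I C hsub C' (by linarith) (by linarith) LL A hband hLLne
  rw [hLLsum] at this
  linarith
end AuxMain

section GroupSide
variable {K : Type*} [AddCommGroup K] {l : ℕ}
variable (t : Multiplicative (Fin l → ℤ) →* Multiplicative (AddAut K))
variable (I₁ I₂ : K → ℝ) (C : ℝ) (b : Fin l → ℝ)

lemma Bform_add (m₁ m₂ : Fin l → ℤ) : Bform b (m₁ + m₂) = Bform b m₁ + Bform b m₂ := by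
  unfold Bform
  rw [← Finset.sum_add_distrib]
  refine Finset.sum_congr rfl fun i _ => ?_
  simp only [Pi.add_apply]
  push_cast
  ring

lemma Bform_neg (m : Fin l → ℤ) : Bform b (-m) = - Bform b m := by
  unfold Bform
  rw [← Finset.sum_neg_distrib]
  refine Finset.sum_congr rfl fun i _ => ?_
  simp only [Pi.neg_apply]
  push_cast
  ring

lemma val_act_single (hval : IsPairOfValuations t I₁ I₂ C b) (i : Fin l) :
    ∀ (nn : ℤ) (k : K), k ≠ 0 →
      I₁ (Multiplicative.toAdd (t (Multiplicative.ofAdd (Pi.single i nn))) k) = I₁ k + b i * nn ∧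
      I₂ (Multiplicative.toAdd (t (Multiplicative.ofAdd (Pi.single i nn))) k) = I₂ k - b i * nn := by
  intro nn
  induction nn using Int.induction_on with
  | zero =>
    intro k hk
    simp [Pi.single_zero]
  | succ n ih =>
    intro k hk
    have hsplit : (Pi.single i ((n:ℤ)+1) : Fin l → ℤ)
        = Pi.single i (n:ℤ) + Pi.single i 1 := by
      rw [← Pi.single_add]
    have hmul : Multiplicative.toAdd (t (Multiplicative.ofAdd (Pi.single i ((n:ℤ)+1)))) k
        = Multiplicative.toAdd (t (Multiplicative.ofAdd (Pi.single i (n:ℤ)))) (Multiplicative.toAdd (t (Multiplicative.ofAdd (Pi.single i 1))) k) := by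
      rw [hsplit, ofAdd_add, map_mul]
      rfl
    have hk1 : Multiplicative.toAdd (t (Multiplicative.ofAdd (Pi.single i 1))) k ≠ 0 := by
      simpa using hk
    have h1 := hval.1 k hk i
    have h2 := ih (Multiplicative.toAdd (t (Multiplicative.ofAdd (Pi.single i 1))) k) hk1
    rw [hmul]
    constructor
    · rw [h2.1, h1.1]; push_cast; ring
    · rw [h2.2, h1.2]; push_cast; ring
  | pred n ih =>
    intro k hk
    set y := Multiplicative.toAdd (t (Multiplicative.ofAdd (Pi.single i (-(n:ℤ)-1) : Multiplicative (Fin l → ℤ)))) k with hy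
    have hyne : y ≠ 0 := by simp [hy, hk]
    have hsplit : (Pi.single i (-(n:ℤ)) : Fin l → ℤ)
        = Pi.single i 1 + Pi.single i (-(n:ℤ)-1) := by
      rw [← Pi.single_add]
      norm_num
    have hmul : Multiplicative.toAdd (t (Multiplicative.ofAdd (Pi.single i (-(n:ℤ))))) k
        = Multiplicative.toAdd (t (Multiplicative.ofAdd (Pi.single i 1))) y := by
      rw [hy, hsplit, ofAdd_add, map_mul]
      rfl
    have h1 := hval.1 y hyne i
    have h2 := ih k hk
    rw [hmul] at h2
    constructor
    · have := h1.1
      rw [this] at h2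
      have := h2.1
      push_cast at this ⊢
      linarith
    · have := h1.2
      rw [this] at h2
      have := h2.2
      push_cast at this ⊢
      linarith

lemma val_act (hval : IsPairOfValuations t I₁ I₂ C b) (v : Fin l → ℤ) (k : K) (hk : k ≠ 0) :
    I₁ (Multiplicative.toAdd (t (Multiplicative.ofAdd v)) k) = I₁ k + Bform b v ∧
    I₂ (Multiplicative.toAdd (t (Multiplicative.ofAdd v)) k) = I₂ k - Bform b v := by
  classical
  have main : ∀ s : Finset (Fin l), ∀ k : K, k ≠ 0 →
      I₁ (Multiplicative.toAdd (t (Multiplicative.ofAdd (∑ i ∈ s, Pi.single i (v i)))) k)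
        = I₁ k + ∑ i ∈ s, b i * ((v i : ℤ) : ℝ) ∧
      I₂ (Multiplicative.toAdd (t (Multiplicative.ofAdd (∑ i ∈ s, Pi.single i (v i)))) k)
        = I₂ k - ∑ i ∈ s, b i * ((v i : ℤ) : ℝ) := by
    intro s
    induction s using Finset.induction_on with
    | empty => intro k hk; simp
    | insert a s hnotmem ih =>
      intro k hk
      rw [Finset.sum_insert hnotmem, Finset.sum_insert hnotmem]
      have hmul : Multiplicative.toAdd (t (Multiplicative.ofAdd (Pi.single a (v a) + ∑ i ∈ s, Pi.single i (v i)))) k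
          = Multiplicative.toAdd (t (Multiplicative.ofAdd (Pi.single a (v a))))
              (Multiplicative.toAdd (t (Multiplicative.ofAdd (∑ i ∈ s, Pi.single i (v i)))) k) := by
        rw [ofAdd_add, map_mul]
        rfl
      have hkne : Multiplicative.toAdd (t (Multiplicative.ofAdd (∑ i ∈ s, Pi.single i (v i)))) k ≠ 0 := by
        simpa using hk
      have hih := ih k hk
      have hsingle := val_act_single t I₁ I₂ C b hval a (v a) _ hkne
      rw [hmul]
      constructor
      · rw [hsingle.1, hih.1]; ring
      · rw [hsingle.2, hih.2]; ring
  have := main Finset.univ k hk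
  rwa [Finset.univ_sum_single] at this

lemma left_sum (L : List (Gsd t)) :
    Multiplicative.toAdd L.prod.left
      = ∑ j ∈ range L.length,
          (Multiplicative.toAdd (t ((L.take j).prod.right))) (Multiplicative.toAdd ((L[j]?.getD 1).left)) := by
  induction L with
  | nil => simp
  | cons a L ih =>
    have hlen : (a :: L).length = L.length + 1 := rfl
    rw [hlen, Finset.sum_range_succ']
    have h0 : ((a :: L).take 0).prod.right = 1 := by simp
    have hterm0 : (Multiplicative.toAdd (t (((a :: L).take 0).prod.right)))
        (Multiplicative.toAdd (((a :: L)[0]?.getD 1).left))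
        = Multiplicative.toAdd a.left := by
      rw [h0, map_one]
      simp
    rw [hterm0]
    have hstep : ∀ j, (Multiplicative.toAdd (t (((a :: L).take (j+1)).prod.right)))
        (Multiplicative.toAdd (((a :: L)[j+1]?.getD 1).left))
        = (Multiplicative.toAdd (t a.right)) ((Multiplicative.toAdd (t ((L.take j).prod.right)))
            (Multiplicative.toAdd ((L[j]?.getD 1).left))) := by
      intro j
      rw [List.take_succ_cons, List.prod_cons, SemidirectProduct.mul_right, map_mul]
      rw [List.getElem?_cons_succ]
      rfl
    have hprodcons : (a :: L).prod = a * L.prod := List.prod_cons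
    rw [hprodcons, SemidirectProduct.mul_left, toAdd_mul]
    have hphi : Multiplicative.toAdd (((addAutToMulAut.comp t) a.right) L.prod.left)
        = (Multiplicative.toAdd (t a.right)) (Multiplicative.toAdd L.prod.left) := rfl
    rw [hphi, ih, map_sum]
    rw [add_comm]
    congr 1
    exact Finset.sum_congr rfl fun j _ => (hstep j).symm

end GroupSide


set_option maxHeartbeats 2000000

/-- Corollary of Proposition 2, "fourth". -/
theorem stmt3 {K : Type*} [AddCommGroup K] {l : ℕ}
    (t : Multiplicative (Fin l → ℤ) →* Multiplicative (AddAut K))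
    (I₁ I₂ : K → ℝ) (C : ℝ) (b : Fin l → ℝ)
    (hval : IsPairOfValuations t I₁ I₂ C b)
    (S : Finset (Gsd t))
    (hgen : Subgroup.closure (S : Set (Gsd t)) = ⊤)
    (z : ℝ)
    (hz : IsGreatest
      ((fun s : Gsd t => Bform b (Multiplicative.toAdd s.right)) ''
        ((S : Set (Gsd t)) ∪ (S : Set (Gsd t))⁻¹)) z)
    (hzpos : 0 < z) :
    ∃ F : ℕ, ∀ g : Gsd t, |Bform b (Multiplicative.toAdd g.right)| ≤ z → g.left ≠ 1 →
      I₁ (Multiplicative.toAdd g.left) ≤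
          (wordLength (S : Set (Gsd t)) g : ℝ) * z / 4 + F ∨
      I₂ (Multiplicative.toAdd g.left) ≤
          (wordLength (S : Set (Gsd t)) g : ℝ) * z / 4 + F := by
  classical
  have hz0 : 0 ≤ z := hzpos.le
  set C' : ℝ := max C (max z 1) with hC'def
  have hC'pos : (0:ℝ) < C' :=
    lt_of_lt_of_le one_pos (le_trans (le_max_right z 1) (le_max_right C _))
  have hCC' : C ≤ C' := le_max_left _ _
  set Cp : ℝ := max C 0 with hCpdef
  have hCp0 : (0:ℝ) ≤ Cp := le_max_right _ _
  -- the symmetrized generating set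
  set SS : Finset (Gsd t) := S ∪ S.image (fun s => s⁻¹) with hSSdef
  have hmemSS : ∀ s : Gsd t, s ∈ (S : Set (Gsd t)) ∪ (S : Set (Gsd t))⁻¹ → s ∈ SS := by
    intro s hs
    rw [hSSdef, Finset.mem_union]
    rcases hs with hs | hs
    · exact Or.inl (by exact_mod_cast hs)
    · refine Or.inr (Finset.mem_image.mpr ⟨s⁻¹, ?_, by simp⟩)
      rw [Set.mem_inv] at hs
      exact_mod_cast hs
  have hSSsub : ∀ s : Gsd t, s ∈ SS → (s ∈ (S : Set (Gsd t)) ∪ (S : Set (Gsd t))⁻¹) := by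
    intro s hs
    rw [hSSdef, Finset.mem_union] at hs
    rcases hs with hs | hs
    · exact Or.inl (by exact_mod_cast hs)
    · obtain ⟨a, ha, rfl⟩ := Finset.mem_image.mp hs
      right
      rw [Set.mem_inv]
      simpa using ha
  have hSSinv : ∀ s : Gsd t, s ∈ SS → s⁻¹ ∈ SS := by
    intro s hs
    apply hmemSS
    rcases hSSsub s hs with h | h
    · right; rw [Set.mem_inv]; simpa using h
    · left; rw [Set.mem_inv] at h; simpa using h
  have hzSS : ∀ s : Gsd t, s ∈ SS → |Bform b (Multiplicative.toAdd s.right)| ≤ z := by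
    intro s hs
    have h1 : Bform b (Multiplicative.toAdd s.right) ≤ z :=
      hz.2 ⟨s, hSSsub s hs, rfl⟩
    have h2 : Bform b (Multiplicative.toAdd (s⁻¹).right) ≤ z :=
      hz.2 ⟨s⁻¹, hSSsub _ (hSSinv s hs), rfl⟩
    have h3 : Bform b (Multiplicative.toAdd (s⁻¹).right)
        = - Bform b (Multiplicative.toAdd s.right) := by
      rw [SemidirectProduct.inv_right]
      rw [show Multiplicative.toAdd (s.right⁻¹) = -(Multiplicative.toAdd s.right) from rfl]
      exact Bform_neg b _
    rw [h3] at h2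
    rw [abs_le]
    exact ⟨by linarith, h1⟩
  -- uniform bound on valuations of generator lamps
  set Df : Gsd t → ℝ := fun s => max (I₁ (Multiplicative.toAdd s.left)) (I₂ (Multiplicative.toAdd s.left))
    with hDfdef
  set D : ℝ := WithBot.unbotD 0 (((SS.filter (fun s => s.left ≠ 1)).image Df).max) with hDdef
  have hD : ∀ s ∈ SS, s.left ≠ 1 →
      I₁ (Multiplicative.toAdd s.left) ≤ D ∧ I₂ (Multiplicative.toAdd s.left) ≤ D := by
    intro s hs hs1
    have hmem : Df s ∈ (SS.filter (fun s => s.left ≠ 1)).image Df :=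
      Finset.mem_image_of_mem _ (Finset.mem_filter.mpr ⟨hs, hs1⟩)
    have hle := Finset.le_max hmem
    rcases hmax : ((SS.filter (fun s => s.left ≠ 1)).image Df).max with _ | DD
    · rw [hmax] at hle; exact absurd hle (WithBot.not_coe_le_bot _)
    · rw [hmax] at hle
      have h1 : Df s ≤ DD := WithBot.coe_le_coe.mp hle
      have hDD : D = DD := by rw [hDdef, hmax]; rfl
      rw [hDdef, hmax]
      constructor
      · exact le_trans (le_max_left _ _) h1
      · exact le_trans (le_max_right _ _) h1
  -- the constant F
  set a : ℝ := 2 * Cp / Real.log 2 with hadef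
  have ha0 : 0 ≤ a := by
    apply div_nonneg (by linarith) (Real.log_nonneg (by norm_num))
  set A₀ : ℝ := 2 * a^2 / z + z/8 + Cp with hA₀def
  have hA₀0 : 0 ≤ A₀ := by
    rw [hA₀def]
    have : 0 ≤ 2 * a^2 / z := by positivity
    linarith
  refine ⟨⌈D + 3*C' + 3*z/2 + A₀⌉₊, ?_⟩
  intro g hgB hgleft
  set k : K := Multiplicative.toAdd g.left with hkdef
  have hk : k ≠ 0 := by
    intro h
    apply hgleft
    have : Multiplicative.ofAdd k = Multiplicative.ofAdd 0 := by rw [h]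
    simpa [hkdef] using this
  -- a geodesic word for g
  set n : ℕ := wordLength (S : Set (Gsd t)) g with hndef
  have hclos : g ∈ Submonoid.closure ((S : Set (Gsd t)) ∪ (S : Set (Gsd t))⁻¹) := by
    have h1 : g ∈ Subgroup.closure (S : Set (Gsd t)) := by rw [hgen]; exact Subgroup.mem_top g
    rw [← Subgroup.mem_toSubmonoid, Subgroup.closure_toSubmonoid] at h1
    exact h1
  obtain ⟨lst, hlmem, hlprod⟩ := Submonoid.exists_list_of_mem_closure hclos
  have hne : {nn | ∃ f : Fin nn → Gsd t,
      (∀ i, f i ∈ (S : Set (Gsd t)) ∪ (S : Set (Gsd t))⁻¹) ∧ (List.ofFn f).prod = g}.Nonempty := by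
    refine ⟨lst.length, lst.get, fun i => hlmem _ (lst.get_mem _), ?_⟩
    rw [List.ofFn_get]; exact hlprod
  have hmem : ∃ f : Fin n → Gsd t,
      (∀ i, f i ∈ (S : Set (Gsd t)) ∪ (S : Set (Gsd t))⁻¹) ∧ (List.ofFn f).prod = g :=
    Nat.sInf_mem hne
  obtain ⟨f, hfmem, hfprod⟩ := hmem
  set Lg : List (Gsd t) := List.ofFn f with hLgdef
  have hLglen : Lg.length = n := by rw [hLgdef, List.length_ofFn]
  set v : ℕ → Multiplicative (Fin l → ℤ) := fun j => ((Lg.take j).prod).right with hvdef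
  set w : ℕ → ℝ := fun j => Bform b (Multiplicative.toAdd (v j)) with hwdef
  set x : ℕ → K := fun j => (Multiplicative.toAdd (t (v j))) (Multiplicative.toAdd ((Lg[j]?.getD 1).left)) with hxdef
  have hsum : (∑ j ∈ range n, x j) = k := by
    have := left_sum t Lg
    rw [hLglen, hfprod] at this
    rw [hkdef, this]
  have hsumne : (∑ j ∈ range n, x j) ≠ 0 := by rw [hsum]; exact hk
  have hw0 : w 0 = 0 := by
    simp only [hwdef, hvdef, List.take_zero, List.prod_nil]
    simp [Bform]
  have hwn : |w n| ≤ z := by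
    have : Lg.take n = Lg := by rw [← hLglen]; exact List.take_length
    simp only [hwdef, hvdef, this, hfprod]
    exact hgB
  have hgetLg : ∀ (j : ℕ) (hj : j < n), Lg[j]?.getD 1 = f ⟨j, hj⟩ := by
    intro j hj
    have hjlen : j < Lg.length := by omega
    rw [List.getElem?_eq_getElem hjlen]
    simp only [Option.getD_some]
    exact List.getElem_ofFn hjlen
  have hfSS : ∀ j (hj : j < n), f ⟨j, hj⟩ ∈ SS := fun j hj => hmemSS _ (hfmem _)
  have hsteps : ∀ j < n, |w (j+1) - w j| ≤ z := by
    intro j hj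
    have hjlen : j < Lg.length := by omega
    have hps := List.prod_take_succ Lg j hjlen
    have hv1 : v (j+1) = v j * (Lg[j]).right := by
      rw [hvdef]
      simp only
      rw [hps, SemidirectProduct.mul_right]
    have hw1 : w (j+1) = w j + Bform b (Multiplicative.toAdd (Lg[j]).right) := by
      rw [hwdef]
      simp only
      rw [hv1, toAdd_mul, Bform_add]
    rw [hw1]
    have hLgj : Lg[j] ∈ SS := by
      have : Lg[j] = f ⟨j, hj⟩ := List.getElem_ofFn hjlen
      rw [this]; exact hfSS j hj
    have := hzSS _ hLgj
    calc |w j + Bform b (Multiplicative.toAdd (Lg[j]).right) - w j|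
        = |Bform b (Multiplicative.toAdd (Lg[j]).right)| := by ring_nf
      _ ≤ z := this
  set M : ℝ := (range (n+1)).sup' nonempty_range_add_one w with hMdef
  set w2 : ℕ → ℝ := fun j => -(w j) with hw2def
  set m : ℝ := (range (n+1)).sup' nonempty_range_add_one w2 with hmdef
  have hMw : ∀ j < n, w j ≤ M := by
    intro j hj
    exact Finset.le_sup' w (Finset.mem_range.mpr (by omega))
  have hmw : ∀ j < n, w2 j ≤ m := by
    intro j hj
    exact Finset.le_sup' w2 (Finset.mem_range.mpr (by omega))
  set X : ℝ := (n:ℝ)*z - 2*(M + m) + 4*C' + 6*z with hXdef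
  set Tmax : ℕ := ⌈X / z⌉₊ with hTmaxdef
  have hsup2 : (range (n+1)).sup' nonempty_range_add_one (fun j => -(w2 j))
      = (range (n+1)).sup' nonempty_range_add_one w := by
    apply Finset.sup'_congr _ rfl
    intro j _
    simp [hw2def]
  have hgeom1 : ∀ u : ℝ, (((range n).filter (fun j => u < w j ∧ w j ≤ u + 2*C')).card : ℝ) * z ≤ X := by
    intro u
    have := geom_band (nonempty_range_succ := nonempty_range_add_one) n z (2*C') u w hz0 (by linarith) hw0 hwn hsteps
    rw [hXdef]
    calc (((range n).filter (fun j => u < w j ∧ w j ≤ u + 2*C')).card : ℝ) * z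
        ≤ (n:ℝ) * z - 2*(M + m) + 2*(2*C') + 6*z := this
      _ = (n:ℝ)*z - 2*(M + m) + 4*C' + 6*z := by ring
  have hgeom2 : ∀ u : ℝ, (((range n).filter (fun j => u < w2 j ∧ w2 j ≤ u + 2*C')).card : ℝ) * z ≤ X := by
    intro u
    have hw20 : w2 0 = 0 := by simp [hw2def, hw0]
    have hw2n : |w2 n| ≤ z := by simpa [hw2def, abs_neg] using hwn
    have hst2 : ∀ j < n, |w2 (j+1) - w2 j| ≤ z := by
      intro j hj
      have := hsteps j hj
      simp only [hw2def]
      rwa [show -w (j+1) - -w j = -(w (j+1) - w j) by ring, abs_neg]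
    have := geom_band (nonempty_range_succ := nonempty_range_add_one) n z (2*C') u w2 hz0 (by linarith) hw20 hw2n hst2
    rw [hsup2] at this
    rw [hXdef]
    calc (((range n).filter (fun j => u < w2 j ∧ w2 j ≤ u + 2*C')).card : ℝ) * z
        ≤ (n:ℝ) * z - 2*(m + M) + 2*(2*C') + 6*z := this
      _ = (n:ℝ)*z - 2*(M + m) + 4*C' + 6*z := by ring
  have hX0 : 0 ≤ X := by
    have := hgeom1 0
    have hcz : (0:ℝ) ≤ (((range n).filter (fun j => 0 < w j ∧ w j ≤ 0 + 2*C')).card : ℝ) * z :=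
      mul_nonneg (Nat.cast_nonneg _) hz0
    linarith
  have hT1 : ∀ u : ℝ, ((range n).filter (fun j => u < w j ∧ w j ≤ u + 2*C')).card ≤ Tmax := by
    intro u
    have h1 := hgeom1 u
    have h2 : (((range n).filter (fun j => u < w j ∧ w j ≤ u + 2*C')).card : ℝ) ≤ X / z :=
      (le_div_iff₀ hzpos).mpr h1
    have h3 : X / z ≤ (Tmax : ℝ) := Nat.le_ceil _
    exact_mod_cast le_trans h2 h3
  have hT2 : ∀ u : ℝ, ((range n).filter (fun j => u < w2 j ∧ w2 j ≤ u + 2*C')).card ≤ Tmax := by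
    intro u
    have h1 := hgeom2 u
    have h2 : (((range n).filter (fun j => u < w2 j ∧ w2 j ≤ u + 2*C')).card : ℝ) ≤ X / z :=
      (le_div_iff₀ hzpos).mpr h1
    have h3 : X / z ≤ (Tmax : ℝ) := Nat.le_ceil _
    exact_mod_cast le_trans h2 h3
  -- lamp bounds
  have hxI : ∀ j < n, x j ≠ 0 →
      I₁ (x j) ≤ w j + D ∧ I₂ (x j) ≤ w2 j + D := by
    intro j hj hxne
    have hget := hgetLg j hj
    set s : Gsd t := f ⟨j, hj⟩ with hsdef
    have hsSS : s ∈ SS := hfSS j hj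
    have hxj : x j = (Multiplicative.toAdd (t (v j))) (Multiplicative.toAdd s.left) := by
      rw [hxdef]; simp only; rw [hget]
    have hlampne : Multiplicative.toAdd s.left ≠ 0 := by
      intro hcon
      apply hxne
      rw [hxj, hcon, map_zero]
    have hsleft : s.left ≠ 1 := by
      intro hcon
      apply hlampne
      rw [hcon]; rfl
    have hact := val_act t I₁ I₂ C b hval (Multiplicative.toAdd (v j))
      (Multiplicative.toAdd s.left) hlampne
    rw [ofAdd_toAdd] at hact
    have hDs := hD s hsSS hsleft
    constructor
    · rw [hxj, hact.1]
      have : Bform b (Multiplicative.toAdd (v j)) = w j := by rw [hwdef]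
      rw [this]
      linarith [hDs.1]
    · rw [hxj, hact.2]
      have : Bform b (Multiplicative.toAdd (v j)) = w j := by rw [hwdef]
      rw [this]
      have : w2 j = -(w j) := by rw [hw2def]
      rw [this]
      linarith [hDs.2]
  -- apply the core lemma twice
  have haux1 := aux_main I₁ C C' z D hCC' hC'pos n w x M m Tmax
    (fun k₁ k₂ h1 h2 h3 => (hval.2.2 k₁ k₂ h1 h2 h3).1)
    hMw (fun j hj => hmw j hj) (fun j hj hne => (hxI j hj hne).1) hT1 hsumne
  have haux2 := aux_main I₂ C C' z D hCC' hC'pos n w2 x m M Tmax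
    (fun k₁ k₂ h1 h2 h3 => (hval.2.2 k₁ k₂ h1 h2 h3).2)
    hmw (fun j hj => by simpa [hw2def] using hMw j hj)
    (fun j hj hne => (hxI j hj hne).2) hT2 hsumne
  rw [hsum] at haux1 haux2
  clear_value C' Cp SS Df D a A₀ k n Lg v w x M w2 m X Tmax
  -- the analytic tail : Cp * clog ≤ X/4 + A₀
  have hcl : Cp * (Nat.clog 2 Tmax : ℝ) ≤ X/4 + A₀ := by
    rcases le_or_gt Tmax 1 with hle | hlt
    · rw [Nat.clog_of_right_le_one hle]
      simp only [Nat.cast_zero, mul_zero]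
      linarith
    · have h2T : 2 ≤ Tmax := hlt
      have hclpos : 1 ≤ Nat.clog 2 Tmax := Nat.clog_pos (by norm_num) h2T
      have hpow := Nat.pow_pred_clog_lt_self (b := 2) (by norm_num) hlt
      have hTpos : (0:ℝ) < (Tmax:ℝ) := by
        have : 0 < Tmax := by omega
        exact_mod_cast this
      have hlog2pos : (0:ℝ) < Real.log 2 := Real.log_pos (by norm_num)
      have hpowR : (2:ℝ) ^ ((Nat.clog 2 Tmax) - 1) < (Tmax : ℝ) := by
        exact_mod_cast hpow
      have hlogpow := Real.log_lt_log (by positivity) hpowR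
      rw [Real.log_pow] at hlogpow
      have hcast : ((Nat.clog 2 Tmax - 1 : ℕ) : ℝ) = (Nat.clog 2 Tmax : ℝ) - 1 := by
        rw [Nat.cast_sub hclpos]; norm_num
      rw [hcast] at hlogpow
      -- (cl - 1) * log 2 < log Tmax
      have hclb : (Nat.clog 2 Tmax : ℝ) ≤ Real.log Tmax / Real.log 2 + 1 := by
        have h := (le_div_iff₀ hlog2pos).mpr hlogpow.le
        linarith
      have hsqrt : Real.log (Tmax : ℝ) ≤ 2 * Real.sqrt (Tmax : ℝ) := by
        have h1 : Real.log (Tmax:ℝ) = 2 * Real.log (Real.sqrt (Tmax:ℝ)) := by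
          rw [Real.log_sqrt hTpos.le]; ring
        have h2 : Real.log (Real.sqrt (Tmax:ℝ)) ≤ Real.sqrt (Tmax:ℝ) - 1 :=
          Real.log_le_sub_one_of_pos (Real.sqrt_pos.mpr hTpos)
        linarith [Real.sqrt_nonneg ((Tmax:ℕ):ℝ)]
      set Y : ℝ := X / z + 1 with hYdef
      clear_value Y
      have hY0 : 0 ≤ Y := by
        rw [hYdef]
        have : 0 ≤ X / z := div_nonneg hX0 hz0
        linarith
      have hTY : (Tmax : ℝ) ≤ Y := by
        rw [hYdef, hTmaxdef]
        exact (Nat.ceil_lt_add_one (div_nonneg hX0 hz0)).le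
      have hsqY : Real.sqrt (Tmax:ℝ) ≤ Real.sqrt Y := Real.sqrt_le_sqrt hTY
      have hamgm : a * Real.sqrt Y ≤ 2*a^2/z + z*Y/8 := by
        have h1 := Real.sq_sqrt hY0
        have h3 : a * Real.sqrt Y * z ≤ z^2*Y/8 + 2*a^2 := by
          nlinarith [sq_nonneg (z*Real.sqrt Y - 4*a), h1]
        have h4 : a * Real.sqrt Y = (a * Real.sqrt Y * z)/z := by field_simp
        rw [h4, div_le_iff₀ hzpos]
        have h5 : (2*a^2/z + z*Y/8)*z = 2*a^2 + z^2*Y/8 := by field_simp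
        rw [h5]
        linarith
      have hYX : z * Y = X + z := by
        rw [hYdef]; field_simp
      calc Cp * (Nat.clog 2 Tmax : ℝ)
          ≤ Cp * (Real.log Tmax / Real.log 2 + 1) := by
            apply mul_le_mul_of_nonneg_left hclb hCp0
        _ = Cp * Real.log Tmax / Real.log 2 + Cp := by ring
        _ ≤ Cp * (2 * Real.sqrt (Tmax:ℝ)) / Real.log 2 + Cp := by
            refine add_le_add ?_ le_rfl
            apply div_le_div_of_nonneg_right ?_ hlog2pos.le
            exact mul_le_mul_of_nonneg_left hsqrt hCp0
        _ = a * Real.sqrt (Tmax:ℝ) + Cp := by rw [hadef]; ring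
        _ ≤ a * Real.sqrt Y + Cp := by
            have := mul_le_mul_of_nonneg_left hsqY ha0
            linarith
        _ ≤ 2*a^2/z + z*Y/8 + Cp := by linarith
        _ = 2*a^2/z + (X + z)/8 + Cp := by rw [← hYX]
        _ ≤ X/4 + A₀ := by
            rw [hA₀def]
            linarith
  -- assemble
  have hMm : M + m = ((n:ℝ)*z + 4*C' + 6*z - X)/2 := by rw [hXdef]; ring
  have hFge : D + 3*C' + 3*z/2 + A₀ ≤ (⌈D + 3*C' + 3*z/2 + A₀⌉₊ : ℝ) := Nat.le_ceil _
  rcases le_total (I₁ k) (I₂ k) with hc | hc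
  · left
    have : I₁ k ≤ (I₁ k + I₂ k)/2 := by linarith
    calc I₁ k ≤ (I₁ k + I₂ k)/2 := this
      _ ≤ ((M + D + Cp * (Nat.clog 2 Tmax) + 2*C') + (m + D + Cp * (Nat.clog 2 Tmax) + 2*C'))/2 := by
          rw [hCpdef]; linarith
      _ ≤ (n:ℝ)*z/4 + (D + 3*C' + 3*z/2 + A₀) := by
          linarith [hcl, hMm]
      _ ≤ (n:ℝ)*z/4 + (⌈D + 3*C' + 3*z/2 + A₀⌉₊:ℝ) := by linarith
  · right
    have : I₂ k ≤ (I₁ k + I₂ k)/2 := by linarith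
    calc I₂ k ≤ (I₁ k + I₂ k)/2 := this
      _ ≤ ((M + D + Cp * (Nat.clog 2 Tmax) + 2*C') + (m + D + Cp * (Nat.clog 2 Tmax) + 2*C'))/2 := by
          rw [hCpdef]; linarith
      _ ≤ (n:ℝ)*z/4 + (D + 3*C' + 3*z/2 + A₀) := by
          linarith [hcl, hMm]
      _ ≤ (n:ℝ)*z/4 + (⌈D + 3*C' + 3*z/2 + A₀⌉₊:ℝ) := by linarith
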